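/- Let Π be a collection of k-wise δ-dependent permutations of a finite set X, i.e., for every set of k distinct inputs, the distribution of the k-tuple of outputs of a uniformly random π ∈ Π is within statistical distance δ of the corresponding distribution for a uniformly random permutation of X. Then for any integer t ≥ 1, the collection Π^t = {π_1 ∘ ⋯ ∘ π_t : π_i ∈ Π} (with the π_i chosen independently and uniformly) is k-wise ((1/2)(2δ)^t)-dependent. -/

import Mathlib

open Finset

/-- The distribution, over a uniformly random index `a : I` of a family of
permutations of `X`, of the tuple of outputs on inputs `x`, evaluated at the
tuple `v`. -/
def tupleDist {X I : Type} [Fintype X] [DecidableEq X] [Fintype I] {k : ℕ}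
    (fam : I → Equiv.Perm X) (x v : Fin k → X) : ℚ :=
  ((Finset.univ.filter fun a : I => ∀ i, fam a (x i) = v i).card : ℚ) /
    (Fintype.card I : ℚ)

/-- A family of permutations of `X` is `k`-wise `δ`-dependent if for every
tuple of `k` distinct inputs, the distribution of the tuple of outputs of a
uniformly sampled member is within statistical distance `δ` of that of a
uniformly random permutation of `X`. -/
def KWiseDeltaDependent (k : ℕ) {X I : Type} [Fintype X] [DecidableEq X]
    [Fintype I] (fam : I → Equiv.Perm X) (δ : ℚ) : Prop :=
  ∀ x : Fin k → X, Function.Injective x →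
    (1 / 2) * ∑ v : Fin k → X,
      |tupleDist fam x v - tupleDist (id : Equiv.Perm X → Equiv.Perm X) x v| ≤ δ

section aux
variable {X I : Type} [Fintype X] [DecidableEq X] [Fintype I] {k : ℕ}

lemma tupleDist_eq (fam : I → Equiv.Perm X) (x v : Fin k → X) :
    tupleDist fam x v =
      (∑ a : I, if ∀ i, fam a (x i) = v i then (1:ℚ) else 0) / (Fintype.card I : ℚ) := by
  unfold tupleDist
  congr 1
  rw [Finset.card_filter]
  push_cast
  rfl

lemma tupleDist_sum_one [Nonempty I] (fam : I → Equiv.Perm X) (x : Fin k → X) :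
    ∑ v : Fin k → X, tupleDist fam x v = 1 := by
  simp_rw [tupleDist_eq, ← Finset.sum_div]
  rw [Finset.sum_comm]
  have h1 : ∀ a : I, ∑ v : Fin k → X,
      (if ∀ i, fam a (x i) = v i then (1:ℚ) else 0) = 1 := by
    intro a
    have : ∀ v : Fin k → X, (∀ i, fam a (x i) = v i) ↔ (fun i => fam a (x i)) = v := by
      intro v; rw [funext_iff]
    simp_rw [this]
    rw [Finset.sum_ite_eq]
    simp
  simp_rw [h1]
  rw [Finset.sum_const, nsmul_eq_mul, mul_one, Finset.card_univ]
  rw [div_self]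
  exact_mod_cast Fintype.card_ne_zero

lemma tupleDist_supp (fam : I → Equiv.Perm X) {x v : Fin k → X}
    (hx : Function.Injective x) (hv : ¬ Function.Injective v) :
    tupleDist fam x v = 0 := by
  unfold tupleDist
  rw [Finset.filter_false_of_mem, Finset.card_empty]
  · simp
  · intro a _ hcond
    exact hv fun i j hij => hx ((fam a).injective (by rw [hcond i, hcond j, hij]))

lemma tupleDist_key [Nonempty I] (fam : I → Equiv.Perm X) (v : Fin k → X) :
    ∑ w : Fin k → X, (if Function.Injective w then tupleDist fam w v else 0)
      = if Function.Injective v then 1 else 0 := by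
  simp_rw [tupleDist_eq]
  have step1 : ∀ w : Fin k → X,
      (if Function.Injective w then
        (∑ a : I, if ∀ i, fam a (w i) = v i then (1:ℚ) else 0) / (Fintype.card I : ℚ) else 0)
      = (∑ a : I, if Function.Injective w then (if ∀ i, fam a (w i) = v i then (1:ℚ) else 0) else 0)
          / (Fintype.card I : ℚ) := by
    intro w
    by_cases hw : Function.Injective w <;> simp [hw]
  simp_rw [step1, ← Finset.sum_div]
  rw [Finset.sum_comm]
  have inner : ∀ a : I, ∑ w : Fin k → X,
      (if Function.Injective w then (if ∀ i, fam a (w i) = v i then (1:ℚ) else 0) else 0)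
      = if Function.Injective v then 1 else 0 := by
    intro a
    have hc : ∀ w : Fin k → X, (∀ i, fam a (w i) = v i) ↔ w = fun i => (fam a).symm (v i) := by
      intro w
      constructor
      · intro hcond; funext i; rw [← hcond i]; simp
      · intro hw i; rw [hw]; simp
    simp_rw [hc]
    have comb : ∀ w : Fin k → X,
        (if Function.Injective w then (if w = (fun i => (fam a).symm (v i)) then (1:ℚ) else 0) else 0)
        = if w = (fun i => (fam a).symm (v i)) then
            (if Function.Injective (fun i => (fam a).symm (v i)) then (1:ℚ) else 0) else 0 := by
      intro w
      by_cases hw : w = fun i => (fam a).symm (v i) <;> simp [hw]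
    simp_rw [comb]
    rw [Finset.sum_ite_eq' Finset.univ (fun i => (fam a).symm (v i))
      (fun _ => if Function.Injective (fun i => (fam a).symm (v i)) then (1:ℚ) else 0)]
    rw [if_pos (Finset.mem_univ _)]
    congr 1
    simp only [eq_iff_iff]
    constructor
    · intro hinj i j hij
      exact hinj (by simp [hij] : (fam a).symm (v i) = (fam a).symm (v j))
    · intro hinj i j hij
      exact hinj ((fam a).symm.injective hij)
  simp_rw [inner]
  rw [Finset.sum_const, nsmul_eq_mul, Finset.card_univ]
  rw [mul_comm,
    mul_div_cancel_right₀ _ (by exact_mod_cast Fintype.card_ne_zero : (Fintype.card I : ℚ) ≠ 0)]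

lemma exists_perm_map {x w : Fin k → X} (hx : Function.Injective x)
    (hw : Function.Injective w) : ∃ σ : Equiv.Perm X, ∀ i, σ (w i) = x i := by
  classical
  let e : {a // a ∈ Set.range w} ≃ {a // a ∈ Set.range x} :=
    ((Equiv.ofInjective w hw).symm.trans (Equiv.ofInjective x hx))
  refine ⟨e.extendSubtype, fun i => ?_⟩
  rw [Equiv.extendSubtype_apply_of_mem e (w i) ⟨i, rfl⟩]
  show ((Equiv.ofInjective x hx) ((Equiv.ofInjective w hw).symm ⟨w i, ⟨i, rfl⟩⟩) : X) = x i
  have : (Equiv.ofInjective w hw).symm ⟨w i, ⟨i, rfl⟩⟩ = i := by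
    apply (Equiv.ofInjective w hw).injective
    simp [Equiv.ofInjective_apply]
  rw [this]
  rfl

/-- constancy of the uniform distribution in the first argument -/
lemma uniform_const_fst {x w : Fin k → X} (hx : Function.Injective x)
    (hw : Function.Injective w) (v : Fin k → X) :
    tupleDist (id : Equiv.Perm X → Equiv.Perm X) x v
      = tupleDist (id : Equiv.Perm X → Equiv.Perm X) w v := by
  obtain ⟨σ, hσ⟩ := exists_perm_map hx hw
  unfold tupleDist
  congr 2
  apply Finset.card_bij' (fun π _ => π * σ) (fun π _ => π * σ⁻¹)
  · intro π hπ
    simp only [Finset.mem_filter, Finset.mem_univ, true_and, id_eq] at hπ ⊢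
    intro i
    rw [Equiv.Perm.mul_apply, hσ i]
    exact hπ i
  · intro π hπ
    simp only [Finset.mem_filter, Finset.mem_univ, true_and, id_eq] at hπ ⊢
    intro i
    rw [Equiv.Perm.mul_apply, ← hσ i]
    simpa using hπ i
  · intro π _; group
  · intro π _; group

/-- constancy of the uniform distribution in the second argument -/
lemma uniform_const_snd (x : Fin k → X) {v v' : Fin k → X} (hv : Function.Injective v)
    (hv' : Function.Injective v') :
    tupleDist (id : Equiv.Perm X → Equiv.Perm X) x v
      = tupleDist (id : Equiv.Perm X → Equiv.Perm X) x v' := by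
  obtain ⟨τ, hτ⟩ := exists_perm_map hv' hv
  unfold tupleDist
  congr 2
  apply Finset.card_bij' (fun π _ => τ * π) (fun π _ => τ⁻¹ * π)
  · intro π hπ
    simp only [Finset.mem_filter, Finset.mem_univ, true_and, id_eq] at hπ ⊢
    intro i
    rw [Equiv.Perm.mul_apply, hπ i, hτ i]
  · intro π hπ
    simp only [Finset.mem_filter, Finset.mem_univ, true_and, id_eq] at hπ ⊢
    intro i
    rw [Equiv.Perm.mul_apply, hπ i, ← hτ i]
    simp
  · intro π _; group
  · intro π _; group

lemma tupleDist_one (fam : I → Equiv.Perm X) (x v : Fin k → X) :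
    tupleDist (fun g : Fin 1 → I => (List.ofFn fun j => fam (g j)).prod) x v
      = tupleDist fam x v := by
  simp_rw [tupleDist_eq]
  have hprod : ∀ g : Fin 1 → I, (List.ofFn fun j => fam (g j)).prod = fam (g 0) := by
    intro g
    simp [List.ofFn_succ]
  congr 1
  · rw [Fintype.sum_equiv (Equiv.funUnique (Fin 1) I)
      _ (fun a : I => if ∀ i, fam a (x i) = v i then (1:ℚ) else 0)]
    intro g
    rw [hprod g]
    rfl
  · simp

lemma tupleDist_comp (fam : I → Equiv.Perm X) (t : ℕ) (x v : Fin k → X) :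
    tupleDist (fun g : Fin (t+1) → I => (List.ofFn fun j => fam (g j)).prod) x v
      = ∑ w : Fin k → X,
          tupleDist (fun g : Fin t → I => (List.ofFn fun j => fam (g j)).prod) x w
            * tupleDist fam w v := by
  simp_rw [tupleDist_eq, div_mul_div_comm, ← Finset.sum_div]
  have hcard : ((Fintype.card (Fin (t+1) → I) : ℚ)) =
      (Fintype.card (Fin t → I) : ℚ) * (Fintype.card I : ℚ) := by
    simp [Fintype.card_fun]
    push_cast
    ring
  rw [hcard]
  congr 1
  -- numerators
  have rhs : (∑ w : Fin k → X,
      (∑ hh : Fin t → I,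
        if ∀ i, (List.ofFn fun j => fam (hh j)).prod (x i) = w i then (1:ℚ) else 0)
        * (∑ a : I, if ∀ i, fam a (w i) = v i then (1:ℚ) else 0))
      = ∑ hh : Fin t → I, ∑ a : I,
          if ∀ i, fam a ((List.ofFn fun j => fam (hh j)).prod (x i)) = v i then (1:ℚ) else 0 := by
    simp_rw [Finset.sum_mul]
    rw [Finset.sum_comm]
    apply Finset.sum_congr rfl
    intro hh _
    have hc : ∀ w : Fin k → X,
        (∀ i, (List.ofFn fun j => fam (hh j)).prod (x i) = w i)
          ↔ (fun i => (List.ofFn fun j => fam (hh j)).prod (x i)) = w := by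
      intro w; rw [funext_iff]
    simp_rw [hc, ite_mul, one_mul, zero_mul]
    rw [Finset.sum_ite_eq Finset.univ (fun i => (List.ofFn fun j => fam (hh j)).prod (x i))
      (fun w => ∑ a : I, if ∀ i, fam a (w i) = v i then (1:ℚ) else 0)]
    rw [if_pos (Finset.mem_univ _)]
  rw [rhs]
  rw [Fintype.sum_equiv (Fin.consEquiv fun _ => I).symm
    _ (fun p : I × (Fin t → I) =>
        if ∀ i, fam p.1 ((List.ofFn fun j => fam (p.2 j)).prod (x i)) = v i then (1:ℚ) else 0)
    ?_]
  · rw [Fintype.sum_prod_type]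
    rw [Finset.sum_comm]
  · intro g
    have hp : (List.ofFn fun j => fam (g j)).prod
        = fam (g 0) * (List.ofFn fun j : Fin t => fam (g j.succ)).prod := by
      rw [List.ofFn_succ]
      simp
    simp only [Fin.consEquiv_symm_apply, hp]
    rfl

lemma half_sum_bound {V : Type} [Fintype V] (dt : V → ℚ) (d1 : V → V → ℚ) (δ ε : ℚ)
    (hδ : 0 ≤ δ)
    (hdt : ∑ w : V, |dt w| ≤ 2 * ε)
    (hd1 : ∀ w : V, dt w ≠ 0 → ∑ v : V, |d1 w v| ≤ 2 * δ) :
    (1/2) * ∑ v : V, |∑ w : V, dt w * d1 w v| ≤ 2 * δ * ε := by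
  have step1 : ∀ v : V, |∑ w : V, dt w * d1 w v| ≤ ∑ w : V, |dt w| * |d1 w v| := by
    intro v
    refine (Finset.abs_sum_le_sum_abs _ _).trans (le_of_eq ?_)
    exact Finset.sum_congr rfl fun w _ => abs_mul _ _
  calc (1/2) * ∑ v : V, |∑ w : V, dt w * d1 w v|
      ≤ (1/2) * ∑ v : V, ∑ w : V, |dt w| * |d1 w v| := by
        have := Finset.sum_le_sum (fun v (_ : v ∈ Finset.univ) => step1 v)
        linarith
    _ = (1/2) * ∑ w : V, |dt w| * ∑ v : V, |d1 w v| := by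
        rw [Finset.sum_comm]
        congr 1
        exact Finset.sum_congr rfl fun w _ => (Finset.mul_sum _ _ _).symm
    _ ≤ (1/2) * ∑ w : V, |dt w| * (2*δ) := by
        have hb : ∀ w : V, |dt w| * ∑ v : V, |d1 w v| ≤ |dt w| * (2*δ) := by
          intro w
          by_cases hw : dt w = 0
          · simp [hw]
          · exact mul_le_mul_of_nonneg_left (hd1 w hw) (abs_nonneg _)
        have := Finset.sum_le_sum (fun w (_ : w ∈ Finset.univ) => hb w)
        linarith
    _ ≤ 2*δ*ε := by
        rw [← Finset.sum_mul]
        have := mul_le_mul_of_nonneg_right hdt (by linarith : (0:ℚ) ≤ 2*δ)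
        linarith

lemma step_lemma [Nonempty I] (fam : I → Equiv.Perm X) (δ ε : ℚ) (t : ℕ)
    (h : KWiseDeltaDependent k fam δ)
    (h2 : KWiseDeltaDependent k
      (fun g : Fin t → I => (List.ofFn fun j => fam (g j)).prod) ε) :
    KWiseDeltaDependent k
      (fun g : Fin (t+1) → I => (List.ofFn fun j => fam (g j)).prod) (2 * δ * ε) := by
  intro x hx
  have hδ : 0 ≤ δ := le_trans (by positivity) (h x hx)
  have hε : 0 ≤ ε := le_trans (by positivity) (h2 x hx)
  have F1 : ∀ v : Fin k → X,
      tupleDist (fun g : Fin (t+1) → I => (List.ofFn fun j => fam (g j)).prod) x v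
          - tupleDist (id : Equiv.Perm X → Equiv.Perm X) x v
      = ∑ w : Fin k → X,
          (tupleDist (fun g : Fin t → I => (List.ofFn fun j => fam (g j)).prod) x w
            - tupleDist (id : Equiv.Perm X → Equiv.Perm X) x w)
          * (tupleDist fam w v - tupleDist (id : Equiv.Perm X → Equiv.Perm X) w v) := by
    intro v
    have T1 := tupleDist_comp fam t x v
    have T2 : ∑ w : Fin k → X,
        tupleDist (fun g : Fin t → I => (List.ofFn fun j => fam (g j)).prod) x w
          * tupleDist (id : Equiv.Perm X → Equiv.Perm X) w v
        = tupleDist (id : Equiv.Perm X → Equiv.Perm X) x v := by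
      have e : ∀ w : Fin k → X,
          tupleDist (fun g : Fin t → I => (List.ofFn fun j => fam (g j)).prod) x w
            * tupleDist (id : Equiv.Perm X → Equiv.Perm X) w v
          = tupleDist (fun g : Fin t → I => (List.ofFn fun j => fam (g j)).prod) x w
            * tupleDist (id : Equiv.Perm X → Equiv.Perm X) x v := by
        intro w
        by_cases hw : Function.Injective w
        · rw [← uniform_const_fst hx hw v]
        · rw [tupleDist_supp _ hx hw, zero_mul, zero_mul]
      rw [Finset.sum_congr rfl (fun w _ => e w), ← Finset.sum_mul,
        tupleDist_sum_one _ x, one_mul]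
    have T3 : ∑ w : Fin k → X,
        tupleDist (id : Equiv.Perm X → Equiv.Perm X) x w * tupleDist fam w v
        = tupleDist (id : Equiv.Perm X → Equiv.Perm X) x x
            * (if Function.Injective v then 1 else 0) := by
      have e : ∀ w : Fin k → X,
          tupleDist (id : Equiv.Perm X → Equiv.Perm X) x w * tupleDist fam w v
          = tupleDist (id : Equiv.Perm X → Equiv.Perm X) x x
              * (if Function.Injective w then tupleDist fam w v else 0) := by
        intro w
        by_cases hw : Function.Injective w
        · rw [if_pos hw, uniform_const_snd x hw hx]
        · rw [if_neg hw, tupleDist_supp _ hx hw, zero_mul, mul_zero]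
      rw [Finset.sum_congr rfl (fun w _ => e w), ← Finset.mul_sum, tupleDist_key fam v]
    have T4 : ∑ w : Fin k → X,
        tupleDist (id : Equiv.Perm X → Equiv.Perm X) x w
          * tupleDist (id : Equiv.Perm X → Equiv.Perm X) w v
        = tupleDist (id : Equiv.Perm X → Equiv.Perm X) x x
            * (if Function.Injective v then 1 else 0) := by
      have e : ∀ w : Fin k → X,
          tupleDist (id : Equiv.Perm X → Equiv.Perm X) x w
            * tupleDist (id : Equiv.Perm X → Equiv.Perm X) w v
          = tupleDist (id : Equiv.Perm X → Equiv.Perm X) x x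
              * (if Function.Injective w then
                  tupleDist (id : Equiv.Perm X → Equiv.Perm X) w v else 0) := by
        intro w
        by_cases hw : Function.Injective w
        · rw [if_pos hw, uniform_const_snd x hw hx]
        · rw [if_neg hw, tupleDist_supp _ hx hw, zero_mul, mul_zero]
      rw [Finset.sum_congr rfl (fun w _ => e w), ← Finset.mul_sum,
        tupleDist_key (id : Equiv.Perm X → Equiv.Perm X) v]
    have expand : ∑ w : Fin k → X,
        (tupleDist (fun g : Fin t → I => (List.ofFn fun j => fam (g j)).prod) x w
          - tupleDist (id : Equiv.Perm X → Equiv.Perm X) x w)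
        * (tupleDist fam w v - tupleDist (id : Equiv.Perm X → Equiv.Perm X) w v)
        = (∑ w : Fin k → X,
            tupleDist (fun g : Fin t → I => (List.ofFn fun j => fam (g j)).prod) x w
              * tupleDist fam w v)
          - (∑ w : Fin k → X,
              tupleDist (fun g : Fin t → I => (List.ofFn fun j => fam (g j)).prod) x w
                * tupleDist (id : Equiv.Perm X → Equiv.Perm X) w v)
          - (∑ w : Fin k → X,
              tupleDist (id : Equiv.Perm X → Equiv.Perm X) x w * tupleDist fam w v)
          + ∑ w : Fin k → X,
              tupleDist (id : Equiv.Perm X → Equiv.Perm X) x w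
                * tupleDist (id : Equiv.Perm X → Equiv.Perm X) w v := by
      rw [← Finset.sum_sub_distrib, ← Finset.sum_sub_distrib, ← Finset.sum_add_distrib]
      apply Finset.sum_congr rfl
      intro w _
      ring
    rw [expand, T2, T3, T4]
    linarith [T1]
  have hA : ∑ w : Fin k → X,
      |tupleDist (fun g : Fin t → I => (List.ofFn fun j => fam (g j)).prod) x w
        - tupleDist (id : Equiv.Perm X → Equiv.Perm X) x w| ≤ 2 * ε := by
    have := h2 x hx
    linarith
  have hB : ∀ w : Fin k → X,
      (tupleDist (fun g : Fin t → I => (List.ofFn fun j => fam (g j)).prod) x w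
        - tupleDist (id : Equiv.Perm X → Equiv.Perm X) x w) ≠ 0 →
      ∑ v : Fin k → X,
        |tupleDist fam w v - tupleDist (id : Equiv.Perm X → Equiv.Perm X) w v| ≤ 2 * δ := by
    intro w hne
    by_cases hw : Function.Injective w
    · have := h w hw
      linarith
    · exfalso
      apply hne
      rw [tupleDist_supp (fun g : Fin t → I => (List.ofFn fun j => fam (g j)).prod) hx hw,
        tupleDist_supp (id : Equiv.Perm X → Equiv.Perm X) hx hw, sub_zero]
  have key := half_sum_bound
      (fun w => tupleDist (fun g : Fin t → I => (List.ofFn fun j => fam (g j)).prod) x w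
        - tupleDist (id : Equiv.Perm X → Equiv.Perm X) x w)
      (fun w v => tupleDist fam w v - tupleDist (id : Equiv.Perm X → Equiv.Perm X) w v)
      δ ε hδ hA hB
  have e : (∑ v : Fin k → X,
      |tupleDist (fun g : Fin (t+1) → I => (List.ofFn fun j => fam (g j)).prod) x v
        - tupleDist (id : Equiv.Perm X → Equiv.Perm X) x v|)
      = ∑ v : Fin k → X,
        |∑ w : Fin k → X,
          (tupleDist (fun g : Fin t → I => (List.ofFn fun j => fam (g j)).prod) x w
            - tupleDist (id : Equiv.Perm X → Equiv.Perm X) x w)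
          * (tupleDist fam w v - tupleDist (id : Equiv.Perm X → Equiv.Perm X) w v)| :=
    Finset.sum_congr rfl fun v _ => by rw [F1 v]
  rw [e]
  exact key

end aux

/-- Composition theorem of Kaplan–Naor–Reingold: composing `t` independent
uniform samples from a `k`-wise `δ`-dependent family of permutations yields a
`k`-wise `(1/2)(2δ)^t`-dependent family. -/
theorem stmt_15 {X I : Type} [Fintype X] [DecidableEq X] [Fintype I]
    [Nonempty I] (k : ℕ) (fam : I → Equiv.Perm X) (δ : ℚ)
    (h : KWiseDeltaDependent k fam δ) (t : ℕ) (ht : 1 ≤ t) :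
    KWiseDeltaDependent k
      (fun g : Fin t → I => (List.ofFn fun j => fam (g j)).prod)
      ((1 / 2) * (2 * δ) ^ t) := by
  induction t, ht using Nat.le_induction with
  | base =>
    intro x hx
    simp_rw [tupleDist_one]
    have := h x hx
    rw [pow_one]
    linarith
  | succ t ht IH =>
    have := step_lemma fam δ ((1 / 2) * (2 * δ) ^ t) t h IH
    have heq : 2 * δ * ((1 / 2) * (2 * δ) ^ t) = (1 / 2) * (2 * δ) ^ (t + 1) := by ring
    rwa [heq] at this
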